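/- arXiv:1205.7036 — 4 statements merged into one kernel-verified Lean document; each statement's English description precedes it below -/
import Mathlib

section
/- Let H be a matrix over F₂ with columns indexed by Fin n × Fin 2 and define Φ : (Fin n → ℝ) → ℝ by Φ(x) = Σ_{E ⊆ Fin n} rank(H_E) · (∏_{i ∈ E} x_i) · (∏_{i ∉ E} (1 − x_i)). Then for every x ∈ [0,1]^n and all indices i, j ∈ Fin n: the partial derivative ∂Φ/∂x_i at x (the derivative at x_i of the function t ↦ Φ(Function.update x i t)) is nonnegative, and the mixed second partial derivative ∂²Φ/(∂x_i ∂x_j) at x is nonpositive. -/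
open Finset

/-- The matrix `H_E`: columns of qubits outside `E` are replaced by zero (this does not
change the rank, so `(erased H E).rank` is the rank of the submatrix `H_E`). -/
def erased {r n : ℕ} (H : Matrix (Fin r) (Fin n × Fin 2) (ZMod 2)) (E : Finset (Fin n)) :
    Matrix (Fin r) (Fin n × Fin 2) (ZMod 2) :=
  Matrix.of fun a p => if p.1 ∈ E then H a p else 0

/-- `Φ(x) = Σ_E rank(H_E) · ∏_{i∈E} x_i · ∏_{i∉E} (1−x_i)`, the expected rank when
coordinate `i` is erased independently with probability `x_i`. -/
noncomputable def Phi {r n : ℕ} (H : Matrix (Fin r) (Fin n × Fin 2) (ZMod 2))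
    (x : Fin n → ℝ) : ℝ :=
  ∑ E : Finset (Fin n), ((erased H E).rank : ℝ) *
    (∏ i ∈ E, x i) * (∏ i ∈ Eᶜ, (1 - x i))

/-- The partial derivative of `f` with respect to the `i`-th coordinate at `x`. -/
noncomputable def pd {n : ℕ} (f : (Fin n → ℝ) → ℝ) (i : Fin n) (x : Fin n → ℝ) : ℝ :=
  deriv (fun t : ℝ => f (Function.update x i t)) (x i)

/-- `φ(p) = (1/n)·Σ_E rank(H_E)·p^|E|·(1−p)^(n−|E|)`, the normalized expected rank of
the erased submatrix. -/
noncomputable def phi {r n : ℕ} (H : Matrix (Fin r) (Fin n × Fin 2) (ZMod 2)) (p : ℝ) : ℝ :=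
  (1 / n : ℝ) * ∑ E : Finset (Fin n),
    ((erased H E).rank : ℝ) * p ^ E.card * (1 - p) ^ (n - E.card)

namespace ExpRank

open Matrix

variable {r n : ℕ}

noncomputable def colSpan (H : Matrix (Fin r) (Fin n × Fin 2) (ZMod 2)) (E : Finset (Fin n)) :
    Submodule (ZMod 2) (Fin r → ZMod 2) :=
  Submodule.span (ZMod 2) (Hᵀ '' {p | p.1 ∈ E})

lemma rank_erased_eq (H : Matrix (Fin r) (Fin n × Fin 2) (ZMod 2)) (E : Finset (Fin n)) :
    (erased H E).rank = Module.finrank (ZMod 2) (colSpan H E) := by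
  rw [Matrix.rank_eq_finrank_span_cols]
  have : Submodule.span (ZMod 2) (Set.range (erased H E)ᵀ) = colSpan H E := by
    apply le_antisymm
    · rw [Submodule.span_le]
      rintro _ ⟨p, rfl⟩
      by_cases hp : p.1 ∈ E
      · have h : (erased H E)ᵀ p = Hᵀ p := by
          funext a; simp [erased, Matrix.transpose_apply, hp]
        rw [h]; exact Submodule.subset_span ⟨p, hp, rfl⟩
      · have h : (erased H E)ᵀ p = 0 := by
          funext a; simp [erased, Matrix.transpose_apply, hp]
        rw [h]; exact Submodule.zero_mem _
    · rw [colSpan, Submodule.span_le]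
      rintro _ ⟨p, hp, rfl⟩
      have hp' : p.1 ∈ E := hp
      have h : Hᵀ p = (erased H E)ᵀ p := by
        funext a; simp [erased, Matrix.transpose_apply, hp']
      rw [h]; exact Submodule.subset_span ⟨p, rfl⟩
  exact congrArg (fun S : Submodule (ZMod 2) (Fin r → ZMod 2) => Module.finrank (ZMod 2) S) this

lemma rk_mono (H : Matrix (Fin r) (Fin n × Fin 2) (ZMod 2)) {E F : Finset (Fin n)} (h : E ⊆ F) :
    (erased H E).rank ≤ (erased H F).rank := by
  rw [rank_erased_eq, rank_erased_eq]
  exact Submodule.finrank_mono (Submodule.span_mono (Set.image_mono fun p hp => h hp))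

lemma rk_submodular (H : Matrix (Fin r) (Fin n × Fin 2) (ZMod 2)) (A B : Finset (Fin n)) :
    (erased H (A ∪ B)).rank + (erased H (A ∩ B)).rank
      ≤ (erased H A).rank + (erased H B).rank := by
  rw [rank_erased_eq, rank_erased_eq, rank_erased_eq, rank_erased_eq]
  have hsup : colSpan H (A ∪ B) = colSpan H A ⊔ colSpan H B := by
    erw [colSpan, colSpan, colSpan, ← Submodule.span_union, ← Set.image_union]
    congr 2
    ext p
    simp [Finset.mem_union]
  have hinf : colSpan H (A ∩ B) ≤ colSpan H A ⊓ colSpan H B :=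
    le_inf (Submodule.span_mono (Set.image_mono fun p hp => (Finset.mem_inter.mp hp).1))
      (Submodule.span_mono (Set.image_mono fun p hp => (Finset.mem_inter.mp hp).2))
  calc Module.finrank (ZMod 2) ↥(colSpan H (A ∪ B)) + Module.finrank (ZMod 2) ↥(colSpan H (A ∩ B))
      ≤ Module.finrank (ZMod 2) ↥(colSpan H A ⊔ colSpan H B)
        + Module.finrank (ZMod 2) ↥(colSpan H A ⊓ colSpan H B) := by
        rw [hsup]
        exact add_le_add_right (Submodule.finrank_mono hinf) _
    _ = _ := Submodule.finrank_sup_add_finrank_inf_eq _ _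


variable {r : ℕ}

variable {n : ℕ}

noncomputable def dterm (c : ℝ) (A B : Finset (Fin n)) (j : Fin n) (x : Fin n → ℝ) : ℝ :=
  if j ∈ A then c * (∏ k ∈ A.erase j, x k) * (∏ k ∈ B, (1 - x k))
  else if j ∈ B then -(c * (∏ k ∈ A, x k) * (∏ k ∈ B.erase j, (1 - x k)))
  else 0

lemma hasDerivAt_term (c : ℝ) (A B : Finset (Fin n)) (j : Fin n) (hAB : j ∉ A ∨ j ∉ B)
    (x : Fin n → ℝ) :
    HasDerivAt (fun t => c * (∏ k ∈ A, Function.update x j t k) *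
      (∏ k ∈ B, (1 - Function.update x j t k))) (dterm c A B j x) (x j) := by
  by_cases hA : j ∈ A
  · have hB : j ∉ B := hAB.resolve_left (not_not_intro hA)
    have h1 : ∀ t : ℝ, (∏ k ∈ A, Function.update x j t k) = t * ∏ k ∈ A.erase j, x k := by
      intro t
      rw [← Finset.mul_prod_erase A _ hA, Function.update_self]
      congr 1
      exact Finset.prod_congr rfl fun k hk => by
        rw [Function.update_apply, if_neg (Finset.ne_of_mem_erase hk)]
    have h2 : ∀ t : ℝ, (∏ k ∈ B, (1 - Function.update x j t k)) = ∏ k ∈ B, (1 - x k) :=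
      fun t => Finset.prod_congr rfl fun k hk => by
        rw [Function.update_apply, if_neg (ne_of_mem_of_not_mem hk hB)]
    have hfun : (fun t => c * (∏ k ∈ A, Function.update x j t k) *
        (∏ k ∈ B, (1 - Function.update x j t k)))
        = fun t => (c * (∏ k ∈ A.erase j, x k) * ∏ k ∈ B, (1 - x k)) * t := by
      funext t; rw [h1, h2]; ring
    rw [hfun]
    simp only [dterm, if_pos hA]
    simpa using (hasDerivAt_id (x j)).const_mul
      (c * (∏ k ∈ A.erase j, x k) * ∏ k ∈ B, (1 - x k))
  · have h1 : ∀ t : ℝ, (∏ k ∈ A, Function.update x j t k) = ∏ k ∈ A, x k :=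
      fun t => Finset.prod_congr rfl fun k hk => by
        rw [Function.update_apply, if_neg (ne_of_mem_of_not_mem hk hA)]
    by_cases hB : j ∈ B
    · have h2 : ∀ t : ℝ, (∏ k ∈ B, (1 - Function.update x j t k))
          = (1 - t) * ∏ k ∈ B.erase j, (1 - x k) := by
        intro t
        rw [← Finset.mul_prod_erase B _ hB, Function.update_self]
        congr 1
        exact Finset.prod_congr rfl fun k hk => by
          rw [Function.update_apply, if_neg (Finset.ne_of_mem_erase hk)]
      have hfun : (fun t => c * (∏ k ∈ A, Function.update x j t k) *
          (∏ k ∈ B, (1 - Function.update x j t k)))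
          = fun t => (c * (∏ k ∈ A, x k) * ∏ k ∈ B.erase j, (1 - x k))
            - (c * (∏ k ∈ A, x k) * ∏ k ∈ B.erase j, (1 - x k)) * t := by
        funext t; rw [h1, h2]; ring
      rw [hfun]
      simp only [dterm, if_neg hA, if_pos hB]
      simpa using ((hasDerivAt_id (x j)).const_mul
        (c * (∏ k ∈ A, x k) * ∏ k ∈ B.erase j, (1 - x k))).const_sub
        (c * (∏ k ∈ A, x k) * ∏ k ∈ B.erase j, (1 - x k))
    · have h2 : ∀ t : ℝ, (∏ k ∈ B, (1 - Function.update x j t k)) = ∏ k ∈ B, (1 - x k) :=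
        fun t => Finset.prod_congr rfl fun k hk => by
          rw [Function.update_apply, if_neg (ne_of_mem_of_not_mem hk hB)]
      have hfun : (fun t => c * (∏ k ∈ A, Function.update x j t k) *
          (∏ k ∈ B, (1 - Function.update x j t k)))
          = fun _ => c * (∏ k ∈ A, x k) * ∏ k ∈ B, (1 - x k) := by
        funext t; rw [h1, h2]
      rw [hfun]
      simp only [dterm, if_neg hA, if_neg hB]
      exact hasDerivAt_const _ _

lemma pd_sum (c : Finset (Fin n) → ℝ) (g : Finset (Fin n) → Finset (Fin n))
    (s : Finset (Finset (Fin n))) (j : Fin n) (x : Fin n → ℝ)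
    (hg : ∀ E ∈ s, j ∉ E ∨ j ∉ g E) :
    pd (fun y => ∑ E ∈ s, c E * (∏ k ∈ E, y k) * (∏ k ∈ g E, (1 - y k))) j x
      = ∑ E ∈ s, dterm (c E) E (g E) j x := by
  have h : HasDerivAt (fun t => ∑ E ∈ s, c E * (∏ k ∈ E, Function.update x j t k) *
      (∏ k ∈ g E, (1 - Function.update x j t k)))
      (∑ E ∈ s, dterm (c E) E (g E) j x) (x j) :=
    HasDerivAt.fun_sum fun E hE => hasDerivAt_term (c E) E (g E) j (hg E hE) x
  exact h.deriv



lemma pd_Phi (H : Matrix (Fin r) (Fin n × Fin 2) (ZMod 2)) (i : Fin n) (x : Fin n → ℝ) :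
    pd (Phi H) i x = ∑ E ∈ univ.filter (fun E : Finset (Fin n) => i ∉ E),
      (((erased H (insert i E)).rank : ℝ) - ((erased H E).rank : ℝ))
        * (∏ k ∈ E, x k) * (∏ k ∈ Eᶜ.erase i, (1 - x k)) := by
  have h0 : pd (Phi H) i x = ∑ E ∈ univ,
      dterm (((erased H E).rank : ℝ)) E Eᶜ i x := by
    have := pd_sum (fun E : Finset (Fin n) => ((erased H E).rank : ℝ))
      (fun E => Eᶜ) univ i x (fun E _ => by
        by_cases h : i ∈ E
        · exact Or.inr (by simp [h])
        · exact Or.inl h)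
    exact this
  rw [h0, ← Finset.sum_filter_add_sum_filter_not univ (fun E : Finset (Fin n) => i ∈ E)]
  have hleft : ∑ E ∈ univ.filter (fun E : Finset (Fin n) => i ∈ E),
      dterm (((erased H E).rank : ℝ)) E Eᶜ i x
      = ∑ E ∈ univ.filter (fun E : Finset (Fin n) => i ∉ E),
        ((erased H (insert i E)).rank : ℝ) * (∏ k ∈ E, x k) * (∏ k ∈ Eᶜ.erase i, (1 - x k)) := by
    refine Finset.sum_bij' (fun E _ => E.erase i) (fun E _ => insert i E) ?_ ?_ ?_ ?_ ?_
    · intro E hE; simp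
    · intro E hE; simp
    · intro E hE
      simp only [Finset.mem_filter, Finset.mem_univ, true_and] at hE
      exact Finset.insert_erase hE
    · intro E hE
      simp only [Finset.mem_filter, Finset.mem_univ, true_and] at hE
      exact Finset.erase_insert hE
    · intro E hE
      simp only [Finset.mem_filter, Finset.mem_univ, true_and] at hE
      rw [dterm, if_pos hE, Finset.insert_erase hE, Finset.compl_erase,
        Finset.erase_insert (by simp [hE])]
  have hright : ∀ E ∈ univ.filter (fun E : Finset (Fin n) => i ∉ E),
      dterm (((erased H E).rank : ℝ)) E Eᶜ i x
      = -(((erased H E).rank : ℝ) * (∏ k ∈ E, x k) * (∏ k ∈ Eᶜ.erase i, (1 - x k))) := by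
    intro E hE
    simp only [Finset.mem_filter, Finset.mem_univ, true_and] at hE
    rw [dterm, if_neg hE, if_pos (Finset.mem_compl.mpr hE)]
  rw [hleft, Finset.sum_congr rfl hright, ← Finset.sum_add_distrib]
  exact Finset.sum_congr rfl fun E _ => by ring


lemma prod_x_nonneg {x : Fin n → ℝ} (hx : ∀ i, x i ∈ Set.Icc (0:ℝ) 1) (E : Finset (Fin n)) :
    0 ≤ ∏ k ∈ E, x k :=
  Finset.prod_nonneg fun k _ => (hx k).1

lemma prod_one_sub_nonneg {x : Fin n → ℝ} (hx : ∀ i, x i ∈ Set.Icc (0:ℝ) 1)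
    (E : Finset (Fin n)) : 0 ≤ ∏ k ∈ E, (1 - x k) :=
  Finset.prod_nonneg fun k _ => by have := (hx k).2; linarith

lemma pd_Phi_nonneg (H : Matrix (Fin r) (Fin n × Fin 2) (ZMod 2)) (i : Fin n)
    (x : Fin n → ℝ) (hx : ∀ i, x i ∈ Set.Icc (0:ℝ) 1) : 0 ≤ pd (Phi H) i x := by
  rw [pd_Phi]
  refine Finset.sum_nonneg fun E _ => ?_
  refine mul_nonneg (mul_nonneg ?_ (prod_x_nonneg hx E)) (prod_one_sub_nonneg hx _)
  have := rk_mono H (Finset.subset_insert i E)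
  have h2 : ((erased H E).rank : ℝ) ≤ ((erased H (insert i E)).rank : ℝ) := by exact_mod_cast this
  linarith

lemma pd_pd_Phi_nonpos (H : Matrix (Fin r) (Fin n × Fin 2) (ZMod 2)) (i j : Fin n)
    (x : Fin n → ℝ) (hx : ∀ i, x i ∈ Set.Icc (0:ℝ) 1) :
    pd (fun y => pd (Phi H) i y) j x ≤ 0 := by
  have hfun : (fun y => pd (Phi H) i y)
      = fun y => ∑ E ∈ univ.filter (fun E : Finset (Fin n) => i ∉ E),
        (((erased H (insert i E)).rank : ℝ) - ((erased H E).rank : ℝ))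
          * (∏ k ∈ E, y k) * (∏ k ∈ Eᶜ.erase i, (1 - y k)) :=
    funext fun y => pd_Phi H i y
  rw [hfun]
  set c : Finset (Fin n) → ℝ :=
    fun E => ((erased H (insert i E)).rank : ℝ) - ((erased H E).rank : ℝ) with hc
  rw [pd_sum c (fun E => Eᶜ.erase i) _ j x (fun E hE => by
    by_cases h : j ∈ E
    · exact Or.inr fun hcon =>
        (Finset.mem_compl.mp (Finset.mem_of_mem_erase hcon)) h
    · exact Or.inl h)]
  by_cases hij : j = i
  · subst hij
    refine le_of_eq (Finset.sum_eq_zero fun E hE => ?_)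
    simp only [Finset.mem_filter, Finset.mem_univ, true_and] at hE
    rw [dterm, if_neg hE, if_neg (Finset.notMem_erase j Eᶜ)]
  · rw [← Finset.sum_filter_add_sum_filter_not
      (univ.filter (fun E : Finset (Fin n) => i ∉ E)) (fun E : Finset (Fin n) => j ∈ E)]
    have hleft : ∑ E ∈ (univ.filter (fun E : Finset (Fin n) => i ∉ E)).filter
        (fun E : Finset (Fin n) => j ∈ E), dterm (c E) E (Eᶜ.erase i) j x
        = ∑ E ∈ (univ.filter (fun E : Finset (Fin n) => i ∉ E)).filter
          (fun E : Finset (Fin n) => ¬ j ∈ E),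
          c (insert j E) * (∏ k ∈ E, x k) * (∏ k ∈ (Eᶜ.erase i).erase j, (1 - x k)) := by
      refine Finset.sum_bij' (fun E _ => E.erase j) (fun E _ => insert j E) ?_ ?_ ?_ ?_ ?_
      · intro E hE
        simp only [Finset.mem_filter, Finset.mem_univ, true_and] at hE ⊢
        exact ⟨fun h => hE.1 (Finset.mem_of_mem_erase h), Finset.notMem_erase j E⟩
      · intro E hE
        simp only [Finset.mem_filter, Finset.mem_univ, true_and] at hE ⊢
        exact ⟨fun h => (Finset.mem_insert.mp h).elim (fun h' => hij h'.symm) hE.1,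
          Finset.mem_insert_self j E⟩
      · intro E hE
        simp only [Finset.mem_filter, Finset.mem_univ, true_and] at hE
        exact Finset.insert_erase hE.2
      · intro E hE
        simp only [Finset.mem_filter, Finset.mem_univ, true_and] at hE
        exact Finset.erase_insert hE.2
      · intro E hE
        simp only [Finset.mem_filter, Finset.mem_univ, true_and] at hE
        rw [dterm, if_pos hE.2, Finset.insert_erase hE.2, Finset.compl_erase,
          Finset.erase_insert_of_ne hij, Finset.erase_insert (by simp [hE.2])]
    have hright : ∀ E ∈ (univ.filter (fun E : Finset (Fin n) => i ∉ E)).filter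
        (fun E : Finset (Fin n) => ¬ j ∈ E),
        dterm (c E) E (Eᶜ.erase i) j x
        = -(c E * (∏ k ∈ E, x k) * (∏ k ∈ (Eᶜ.erase i).erase j, (1 - x k))) := by
      intro E hE
      simp only [Finset.mem_filter, Finset.mem_univ, true_and] at hE
      rw [dterm, if_neg hE.2,
        if_pos (Finset.mem_erase.mpr ⟨hij, Finset.mem_compl.mpr hE.2⟩)]
    rw [hleft, Finset.sum_congr rfl hright, ← Finset.sum_add_distrib]
    refine Finset.sum_nonpos fun E hE => ?_
    simp only [Finset.mem_filter, Finset.mem_univ, true_and] at hE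
    have hsub := rk_submodular H (insert i E) (insert j E)
    have hu : insert i E ∪ insert j E = insert i (insert j E) := by
      rw [Finset.insert_union, Finset.union_insert, Finset.union_self]
    have hint : insert i E ∩ insert j E = E := by
      ext k
      simp only [Finset.mem_inter, Finset.mem_insert]
      constructor
      · rintro ⟨h1 | h1, h2 | h2⟩
        · exact absurd (h1 ▸ h2) (fun h => hij (h.symm))
        · exact h2
        · exact h1
        · exact h1
      · intro h; exact ⟨Or.inr h, Or.inr h⟩
    rw [hu, hint] at hsub
    have hd : c (insert j E) - c E ≤ 0 := by
      simp only [hc]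
      have : ((erased H (insert i (insert j E))).rank : ℝ) + ((erased H E).rank : ℝ)
          ≤ ((erased H (insert i E)).rank : ℝ) + ((erased H (insert j E)).rank : ℝ) := by
        exact_mod_cast hsub
      linarith
    have hP := prod_x_nonneg hx E
    have hQ := prod_one_sub_nonneg hx ((Eᶜ.erase i).erase j)
    have : c (insert j E) * (∏ k ∈ E, x k) * (∏ k ∈ (Eᶜ.erase i).erase j, (1 - x k))
        + -(c E * (∏ k ∈ E, x k) * (∏ k ∈ (Eᶜ.erase i).erase j, (1 - x k)))
        = (c (insert j E) - c E) * ((∏ k ∈ E, x k) * ∏ k ∈ (Eᶜ.erase i).erase j, (1 - x k)) := by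
      ring
    rw [this]
    exact mul_nonpos_of_nonpos_of_nonneg hd (mul_nonneg hP hQ)

end ExpRank

theorem expected_rank_partial_derivatives
    {r n : ℕ} (H : Matrix (Fin r) (Fin n × Fin 2) (ZMod 2))
    (x : Fin n → ℝ) (hx : ∀ i, x i ∈ Set.Icc (0 : ℝ) 1) (i j : Fin n) :
    0 ≤ pd (Phi H) i x ∧ pd (fun y => pd (Phi H) i y) j x ≤ 0 := ⟨ExpRank.pd_Phi_nonneg H i x hx, ExpRank.pd_pd_Phi_nonpos H i j x hx⟩
end

section
/- Let n ≥ 1 and let H be a matrix over F₂ with columns indexed by Fin n × Fin 2. The function φ : ℝ → ℝ, φ(p) = (1/n)·Σ_{E ⊆ Fin n} rank(H_E) · p^|E| · (1−p)^(n−|E|), is monotone nondecreasing on the interval [0,1]. -/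
open Finset

lemma erased_rank_mono {r n : ℕ} (H : Matrix (Fin r) (Fin n × Fin 2) (ZMod 2))
    {E F : Finset (Fin n)} (h : E ⊆ F) : (erased H E).rank ≤ (erased H F).rank := by
  have key : erased H E = erased H F *
      Matrix.of (fun p q : Fin n × Fin 2 => if p = q ∧ q.1 ∈ E then (1 : ZMod 2) else 0) := by
    ext a q
    rw [Matrix.mul_apply, Finset.sum_eq_single q]
    · by_cases hq : q.1 ∈ E
      · simp [erased, hq, h hq]
      · simp [erased, hq]
    · intro p _ hpq
      simp [hpq]
    · simp
  rw [key]
  exact Matrix.rank_mul_le_left _ _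

lemma key_nonneg {n : ℕ} (c : Finset (Fin n) → ℝ)
    (hc : ∀ (E : Finset (Fin n)) (i : Fin n), i ∉ E → c E ≤ c (insert i E))
    {p : ℝ} (hp0 : 0 ≤ p) (hp1 : p ≤ 1) :
    0 ≤ ∑ E : Finset (Fin n),
      (c E * ((E.card : ℝ) * p ^ (E.card - 1)) * (1 - p) ^ (n - E.card) +
       c E * p ^ E.card * (-(((n - E.card : ℕ) : ℝ) * (1 - p) ^ (n - E.card - 1)))) := by
  have hq0 : (0:ℝ) ≤ 1 - p := by linarith
  have hsplit : ∀ E : Finset (Fin n),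
      (c E * ((E.card : ℝ) * p ^ (E.card - 1)) * (1 - p) ^ (n - E.card) +
       c E * p ^ E.card * (-(((n - E.card : ℕ) : ℝ) * (1 - p) ^ (n - E.card - 1)))) =
      (c E * ((E.card : ℝ) * p ^ (E.card - 1)) * (1 - p) ^ (n - E.card)) -
      (c E * p ^ E.card * (((n - E.card : ℕ) : ℝ) * (1 - p) ^ (n - E.card - 1))) := by
    intro E; ring
  rw [Finset.sum_congr rfl fun E _ => hsplit E, Finset.sum_sub_distrib, sub_nonneg]
  -- rewrite both sides as double sums over (i, F) with i ∉ F
  have hA : ∑ E : Finset (Fin n),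
      c E * ((E.card : ℝ) * p ^ (E.card - 1)) * (1 - p) ^ (n - E.card)
      = ∑ i : Fin n, ∑ F ∈ Finset.univ.filter (fun F : Finset (Fin n) => i ∉ F),
          c (insert i F) * p ^ F.card * (1 - p) ^ (n - F.card - 1) := by
    have h1 : ∀ E : Finset (Fin n),
        c E * ((E.card : ℝ) * p ^ (E.card - 1)) * (1 - p) ^ (n - E.card)
        = ∑ i ∈ E, c E * p ^ (E.card - 1) * (1 - p) ^ (n - E.card) := by
      intro E
      rw [Finset.sum_const, nsmul_eq_mul]
      ring
    rw [Finset.sum_congr rfl fun E _ => h1 E]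
    rw [Finset.sum_comm' (s' := fun i => Finset.univ.filter (fun E : Finset (Fin n) => i ∈ E))
      (t' := Finset.univ) (by intro E i; simp)]
    refine Finset.sum_congr rfl fun i _ => ?_
    refine Finset.sum_nbij' (fun E => E.erase i) (fun F => insert i F) ?_ ?_ ?_ ?_ ?_
    · intro E hE; simp [Finset.mem_filter] at hE ⊢
    · intro F hF; simp [Finset.mem_filter] at hF ⊢
    · intro E hE; simp [Finset.mem_filter] at hE; exact Finset.insert_erase hE
    · intro F hF; simp [Finset.mem_filter] at hF; exact Finset.erase_insert hF
    · intro E hE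
      simp only [Finset.mem_filter, Finset.mem_univ, true_and] at hE
      rw [Finset.insert_erase hE, Finset.card_erase_of_mem hE]
      have hcard : 1 ≤ E.card := Finset.card_pos.mpr ⟨i, hE⟩
      have : n - (E.card - 1) - 1 = n - E.card := by omega
      rw [this]
  have hB : ∑ E : Finset (Fin n),
      c E * p ^ E.card * (((n - E.card : ℕ) : ℝ) * (1 - p) ^ (n - E.card - 1))
      = ∑ i : Fin n, ∑ F ∈ Finset.univ.filter (fun F : Finset (Fin n) => i ∉ F),
          c F * p ^ F.card * (1 - p) ^ (n - F.card - 1) := by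
    have h1 : ∀ E : Finset (Fin n),
        c E * p ^ E.card * (((n - E.card : ℕ) : ℝ) * (1 - p) ^ (n - E.card - 1))
        = ∑ i ∈ Eᶜ, c E * p ^ E.card * (1 - p) ^ (n - E.card - 1) := by
      intro E
      rw [Finset.sum_const, nsmul_eq_mul, Finset.card_compl, Fintype.card_fin]
      ring
    rw [Finset.sum_congr rfl fun E _ => h1 E]
    rw [Finset.sum_comm' (s' := fun i => Finset.univ.filter (fun E : Finset (Fin n) => i ∉ E))
      (t' := Finset.univ) (by intro E i; simp)]
  rw [hA, hB]
  refine Finset.sum_le_sum fun i _ => Finset.sum_le_sum fun F hF => ?_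
  simp only [Finset.mem_filter, Finset.mem_univ, true_and] at hF
  have := hc F i hF
  have h2 : (0:ℝ) ≤ p ^ F.card * (1 - p) ^ (n - F.card - 1) :=
    mul_nonneg (pow_nonneg hp0 _) (pow_nonneg hq0 _)
  calc c F * p ^ F.card * (1 - p) ^ (n - F.card - 1)
      = c F * (p ^ F.card * (1 - p) ^ (n - F.card - 1)) := by ring
    _ ≤ c (insert i F) * (p ^ F.card * (1 - p) ^ (n - F.card - 1)) :=
        mul_le_mul_of_nonneg_right this h2
    _ = c (insert i F) * p ^ F.card * (1 - p) ^ (n - F.card - 1) := by ring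

lemma phi_hasDerivAt {r n : ℕ} (H : Matrix (Fin r) (Fin n × Fin 2) (ZMod 2)) (p : ℝ) :
    HasDerivAt (phi H)
      ((1 / n : ℝ) * ∑ E : Finset (Fin n),
        (((erased H E).rank : ℝ) * ((E.card : ℝ) * p ^ (E.card - 1)) * (1 - p) ^ (n - E.card) +
         ((erased H E).rank : ℝ) * p ^ E.card *
           (-(((n - E.card : ℕ) : ℝ) * (1 - p) ^ (n - E.card - 1))))) p := by
  unfold phi
  refine HasDerivAt.const_mul _ ?_
  refine HasDerivAt.fun_sum fun E _ => ?_
  have h1 : HasDerivAt (fun x : ℝ => ((erased H E).rank : ℝ) * x ^ E.card)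
      (((erased H E).rank : ℝ) * ((E.card : ℝ) * p ^ (E.card - 1))) p :=
    (hasDerivAt_pow E.card p).const_mul _
  have h2 : HasDerivAt (fun x : ℝ => (1 - x) ^ (n - E.card))
      (-(((n - E.card : ℕ) : ℝ) * (1 - p) ^ (n - E.card - 1))) p := by
    have := (hasDerivAt_pow (n - E.card) (1 - p)).comp p
      (((hasDerivAt_id p).const_sub 1))
    simpa [Function.comp_def] using this
  simpa using h1.fun_mul h2

theorem expected_rank_monotone
    {r n : ℕ} (hn : 1 ≤ n) (H : Matrix (Fin r) (Fin n × Fin 2) (ZMod 2)) :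
    MonotoneOn (phi H) (Set.Icc (0 : ℝ) 1) := by
  refine monotoneOn_of_deriv_nonneg (convex_Icc 0 1) ?_ ?_ ?_
  · exact fun x _ => ((phi_hasDerivAt H x).differentiableAt).continuousAt.continuousWithinAt
  · exact fun x _ => ((phi_hasDerivAt H x).differentiableAt).differentiableWithinAt
  · intro x hx
    rw [interior_Icc, Set.mem_Ioo] at hx
    rw [(phi_hasDerivAt H x).deriv]
    refine mul_nonneg (by positivity) ?_
    exact key_nonneg (fun E => ((erased H E).rank : ℝ))
      (fun E i hi => Nat.cast_le.mpr (erased_rank_mono H (Finset.subset_insert i E)))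
      hx.1.le hx.2.le
end

section
/- Let n ≥ 1 and let H be a matrix over F₂ with columns indexed by Fin n × Fin 2. The function φ : ℝ → ℝ, φ(p) = (1/n)·Σ_{E ⊆ Fin n} rank(H_E) · p^|E| · (1−p)^(n−|E|), is concave on the interval [0,1]. -/
open Finset

namespace ExpRankAux
open Matrix

variable {r n : ℕ}

/-! ### Submodularity of the rank function -/

/-- the span of the columns of `erased H E` -/
noncomputable def U (H : Matrix (Fin r) (Fin n × Fin 2) (ZMod 2)) (E : Finset (Fin n)) :
    Submodule (ZMod 2) (Fin r → ZMod 2) :=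
  Submodule.span (ZMod 2) (Set.range (erased H E)ᵀ)

lemma rank_eq_finrank_U (H : Matrix (Fin r) (Fin n × Fin 2) (ZMod 2)) (E : Finset (Fin n)) :
    (erased H E).rank = Module.finrank (ZMod 2) (U H E) := by
  unfold U
  exact Matrix.rank_eq_finrank_span_cols _

lemma col_mem_U (H : Matrix (Fin r) (Fin n × Fin 2) (ZMod 2)) {E : Finset (Fin n)}
    (p : Fin n × Fin 2) : (erased H E)ᵀ p ∈ U H E := by
  unfold U
  exact Submodule.subset_span ⟨p, rfl⟩

lemma U_mono (H : Matrix (Fin r) (Fin n × Fin 2) (ZMod 2)) {E E' : Finset (Fin n)}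
    (h : E ⊆ E') : U H E ≤ U H E' := by
  unfold U
  apply Submodule.span_le.2
  rintro v ⟨p, rfl⟩
  by_cases hp : p.1 ∈ E
  · have : (erased H E)ᵀ p = (erased H E')ᵀ p := by
      funext a
      simp [erased, Matrix.transpose_apply, hp, h hp]
    rw [this]
    exact col_mem_U H p
  · have : (erased H E)ᵀ p = 0 := by
      funext a
      simp [erased, Matrix.transpose_apply, hp]
    rw [this]
    exact (U H E').zero_mem

lemma U_sup (H : Matrix (Fin r) (Fin n × Fin 2) (ZMod 2)) (i j : Fin n) (F : Finset (Fin n)) :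
    U H (insert i F) ⊔ U H (insert j F) = U H (insert i (insert j F)) := by
  apply le_antisymm
  · refine sup_le (U_mono H (insert_subset_insert _ (subset_insert _ _)))
      (U_mono H (insert_subset (Finset.mem_insert_of_mem (Finset.mem_insert_self _ _))
        (fun x hx => Finset.mem_insert_of_mem (Finset.mem_insert_of_mem hx))))
  · show U H (insert i (insert j F)) ≤ _
    unfold U
    apply Submodule.span_le.2
    rintro v ⟨p, rfl⟩
    by_cases hp : p.1 ∈ insert i F
    · have hmem : p.1 ∈ insert i (insert j F) := by
        rcases Finset.mem_insert.1 hp with h | h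
        · exact Finset.mem_insert.2 (Or.inl h)
        · exact Finset.mem_insert_of_mem (Finset.mem_insert_of_mem h)
      have hcol : (erased H (insert i (insert j F)))ᵀ p = (erased H (insert i F))ᵀ p := by
        funext a
        show (if p.1 ∈ insert i (insert j F) then H a p else 0)
          = (if p.1 ∈ insert i F then H a p else 0)
        rw [if_pos hmem, if_pos hp]
      rw [hcol]
      exact le_sup_left (α := Submodule (ZMod 2) (Fin r → ZMod 2)) (col_mem_U H p)
    · by_cases hq : p.1 ∈ insert j F
      · have hmem : p.1 ∈ insert i (insert j F) := Finset.mem_insert_of_mem hq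
        have hcol : (erased H (insert i (insert j F)))ᵀ p = (erased H (insert j F))ᵀ p := by
          funext a
          show (if p.1 ∈ insert i (insert j F) then H a p else 0)
            = (if p.1 ∈ insert j F then H a p else 0)
          rw [if_pos hmem, if_pos hq]
        rw [hcol]
        exact le_sup_right (α := Submodule (ZMod 2) (Fin r → ZMod 2)) (col_mem_U H p)
      · have hnot : p.1 ∉ insert i (insert j F) := by
          intro h
          rcases Finset.mem_insert.1 h with h | h
          · exact hp (Finset.mem_insert.2 (Or.inl h))
          · exact hq h
        have hcol : (erased H (insert i (insert j F)))ᵀ p = 0 := by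
          funext a
          show (if p.1 ∈ insert i (insert j F) then H a p else 0) = 0
          rw [if_neg hnot]
        rw [hcol]
        exact Submodule.zero_mem _

/-- Submodularity of the rank of the erased matrix. -/
lemma rank_submodular (H : Matrix (Fin r) (Fin n × Fin 2) (ZMod 2)) (i j : Fin n)
    (F : Finset (Fin n)) :
    ((erased H (insert i (insert j F))).rank : ℝ) + ((erased H F).rank : ℝ) ≤
      ((erased H (insert i F)).rank : ℝ) + ((erased H (insert j F)).rank : ℝ) := by
  have key : Module.finrank (ZMod 2) ↥(U H (insert i F) ⊔ U H (insert j F)) +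
      Module.finrank (ZMod 2) ↥(U H (insert i F) ⊓ U H (insert j F)) =
      Module.finrank (ZMod 2) ↥(U H (insert i F)) +
      Module.finrank (ZMod 2) ↥(U H (insert j F)) :=
    Submodule.finrank_sup_add_finrank_inf_eq _ _
  have h1 : (erased H (insert i (insert j F))).rank ≤
      Module.finrank (ZMod 2) ↥(U H (insert i F) ⊔ U H (insert j F)) := by
    rw [rank_eq_finrank_U, ← U_sup]
  have h2 : (erased H F).rank ≤
      Module.finrank (ZMod 2) ↥(U H (insert i F) ⊓ U H (insert j F)) := by
    rw [rank_eq_finrank_U]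
    exact Submodule.finrank_mono (le_inf (U_mono H (subset_insert _ _))
      (U_mono H (subset_insert _ _)))
  have := add_le_add h1 h2
  rw [key] at this
  rw [rank_eq_finrank_U H (insert i F), rank_eq_finrank_U H (insert j F)]
  exact_mod_cast this

/-! ### The generic polynomial and its derivatives -/

/-- `g s c p = Σ_{E ⊆ s} c(E) ∏_{i ∈ s} w_i(E)` where `w_i = p` if `i ∈ E` else `1-p`. -/
noncomputable def g (s : Finset (Fin n)) (c : Finset (Fin n) → ℝ) (p : ℝ) : ℝ :=
  ∑ E ∈ s.powerset, c E * ∏ i ∈ s, (if i ∈ E then p else 1 - p)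

lemma prod_w {s E : Finset (Fin n)} (hE : E ⊆ s) (p : ℝ) :
    (∏ i ∈ s, (if i ∈ E then p else 1 - p)) = p ^ E.card * (1 - p) ^ (s.card - E.card) := by
  rw [← Finset.prod_sdiff hE]
  have h1 : (∏ i ∈ E, (if i ∈ E then p else 1 - p)) = p ^ E.card := by
    rw [Finset.prod_congr rfl (fun i hi => if_pos hi), Finset.prod_const]
  have h2 : (∏ i ∈ s \ E, (if i ∈ E then p else 1 - p)) = (1 - p) ^ (s.card - E.card) := by
    rw [Finset.prod_congr rfl (fun i hi => if_neg (Finset.mem_sdiff.1 hi).2),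
      Finset.prod_const, Finset.card_sdiff_of_subset hE]
  rw [h1, h2, mul_comm]

lemma hasDerivAt_g (s : Finset (Fin n)) (c : Finset (Fin n) → ℝ) (p : ℝ) :
    HasDerivAt (g s c)
      (∑ i ∈ s, g (s.erase i) (fun F => c (insert i F) - c F) p) p := by
  have hterm : ∀ E ∈ s.powerset,
      HasDerivAt (fun q => c E * ∏ i ∈ s, (if i ∈ E then q else 1 - q))
        (c E * ∑ i ∈ s, (∏ j ∈ s.erase i, (if j ∈ E then p else 1 - p)) *
          (if i ∈ E then (1 : ℝ) else -1)) p := by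
    intro E _
    refine HasDerivAt.const_mul _ ?_
    have := HasDerivAt.fun_finsetProd (u := s)
      (f := fun i q => if i ∈ E then q else 1 - q)
      (f' := fun i => if i ∈ E then (1 : ℝ) else -1) (x := p) ?_
    · simpa [smul_eq_mul] using this
    · intro i _
      by_cases hi : i ∈ E
      · simpa [hi] using hasDerivAt_id' p
      · simpa [hi] using (hasDerivAt_id p).const_sub 1
  have hsum := HasDerivAt.fun_sum hterm
  have heq : (∑ E ∈ s.powerset, c E * ∑ i ∈ s,
        (∏ j ∈ s.erase i, (if j ∈ E then p else 1 - p)) * (if i ∈ E then (1 : ℝ) else -1)) =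
      ∑ i ∈ s, g (s.erase i) (fun F => c (insert i F) - c F) p := by
    simp_rw [Finset.mul_sum]
    rw [Finset.sum_comm]
    refine Finset.sum_congr rfl fun i hi => ?_
    obtain ⟨t, hit, rfl⟩ : ∃ t, i ∉ t ∧ insert i t = s :=
      ⟨s.erase i, Finset.notMem_erase _ _, Finset.insert_erase hi⟩
    rw [Finset.sum_powerset_insert hit]
    have e1 : ∀ F ∈ t.powerset,
        c F * ((∏ j ∈ (insert i t).erase i, (if j ∈ F then p else 1 - p)) *
          (if i ∈ F then (1 : ℝ) else -1)) =
        -(c F * ∏ j ∈ t, (if j ∈ F then p else 1 - p)) := by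
      intro F hF
      have hiF : i ∉ F := fun h => hit (Finset.mem_powerset.1 hF h)
      rw [Finset.erase_insert hit, if_neg hiF]
      ring
    have e2 : ∀ F ∈ t.powerset,
        c (insert i F) * ((∏ j ∈ (insert i t).erase i,
            (if j ∈ insert i F then p else 1 - p)) *
          (if i ∈ insert i F then (1 : ℝ) else -1)) =
        c (insert i F) * ∏ j ∈ t, (if j ∈ F then p else 1 - p) := by
      intro F hF
      rw [Finset.erase_insert hit, if_pos (Finset.mem_insert_self _ _)]
      have : (∏ j ∈ t, (if j ∈ insert i F then p else 1 - p)) =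
          ∏ j ∈ t, (if j ∈ F then p else 1 - p) := by
        refine Finset.prod_congr rfl fun j hj => ?_
        have hji : j ≠ i := fun h => hit (h ▸ hj)
        simp [Finset.mem_insert, hji]
      rw [this]
      ring
    rw [Finset.sum_congr rfl e1, Finset.sum_congr rfl e2, g,
      Finset.erase_insert hit]
    rw [← Finset.sum_add_distrib]
    refine Finset.sum_congr rfl fun F hF => ?_
    ring
  rw [heq] at hsum
  exact hsum

lemma g_nonpos {s : Finset (Fin n)} {c : Finset (Fin n) → ℝ} {p : ℝ}
    (hc : ∀ F ∈ s.powerset, c F ≤ 0) (h0 : 0 ≤ p) (h1 : p ≤ 1) : g s c p ≤ 0 := by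
  refine Finset.sum_nonpos fun E hE => ?_
  have hprod : (0 : ℝ) ≤ ∏ i ∈ s, (if i ∈ E then p else 1 - p) := by
    refine Finset.prod_nonneg fun i _ => ?_
    by_cases hi : i ∈ E <;> simp [hi, h0, sub_nonneg.2 h1]
  exact mul_nonpos_of_nonpos_of_nonneg (hc E hE) hprod

end ExpRankAux

theorem expected_rank_concave
    {r n : ℕ} (hn : 1 ≤ n) (H : Matrix (Fin r) (Fin n × Fin 2) (ZMod 2)) :
    ConcaveOn ℝ (Set.Icc (0 : ℝ) 1) (phi H) := by
  classical
  set c : Finset (Fin n) → ℝ := fun E => ((erased H E).rank : ℝ) with hc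
  -- phi H = (1/n) • g univ c
  have hphi : phi H = fun p => (1 / n : ℝ) * ExpRankAux.g Finset.univ c p := by
    funext p
    unfold phi ExpRankAux.g
    congr 1
    rw [Finset.powerset_univ]
    refine Finset.sum_congr rfl fun E _ => ?_
    rw [ExpRankAux.prod_w (Finset.subset_univ E)]
    have : (Finset.univ : Finset (Fin n)).card = n := by simp
    rw [this, mul_assoc]
  -- first and second derivative descriptions
  set G : ℝ → ℝ := ExpRankAux.g Finset.univ c with hG
  set G' : ℝ → ℝ := fun p => ∑ i ∈ Finset.univ,
    ExpRankAux.g (Finset.univ.erase i) (fun F => c (insert i F) - c F) p with hG'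
  have hdG : ∀ p, HasDerivAt G (G' p) p := fun p => ExpRankAux.hasDerivAt_g _ _ p
  set G'' : ℝ → ℝ := fun p => ∑ i ∈ (Finset.univ : Finset (Fin n)),
    ∑ j ∈ (Finset.univ.erase i),
      ExpRankAux.g ((Finset.univ.erase i).erase j)
        (fun F => (c (insert i (insert j F)) - c (insert j F))
          - (c (insert i F) - c F)) p with hG''
  have hdG' : ∀ p, HasDerivAt G' (G'' p) p := by
    intro p
    exact HasDerivAt.fun_sum fun i _ => ExpRankAux.hasDerivAt_g _ _ p
  have hderivG : deriv G = G' := funext fun p => (hdG p).deriv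
  have hderivG' : deriv G' = G'' := funext fun p => (hdG' p).deriv
  have hG''nonpos : ∀ p ∈ Set.Icc (0 : ℝ) 1, G'' p ≤ 0 := by
    intro p hp
    refine Finset.sum_nonpos fun i _ => Finset.sum_nonpos fun j hj => ?_
    refine ExpRankAux.g_nonpos (fun F hF => ?_) hp.1 hp.2
    have := ExpRankAux.rank_submodular H i j F
    simp only [hc]
    linarith
  -- concavity of G on Icc 0 1
  have hGconc : ConcaveOn ℝ (Set.Icc (0 : ℝ) 1) G := by
    refine concaveOn_of_deriv2_nonpos (convex_Icc 0 1) ?_ ?_ ?_ ?_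
    · exact fun p _ => ((hdG p).differentiableAt.continuousAt).continuousWithinAt
    · exact fun p _ => (hdG p).differentiableAt.differentiableWithinAt
    · intro p _
      rw [hderivG]
      exact (hdG' p).differentiableAt.differentiableWithinAt
    · intro p hp
      have : deriv^[2] G p = deriv (deriv G) p := by
        simp [Function.iterate_succ, Function.iterate_one]
      rw [this, hderivG, hderivG']
      exact hG''nonpos p (interior_subset hp)
  -- scale by 1/n ≥ 0
  rw [hphi]
  have hnn : (0 : ℝ) ≤ 1 / n := by positivity
  have := hGconc.smul hnn
  simpa [smul_eq_mul] using this
end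

section
/- Let n ≥ 1, let H be a matrix over F₂ with columns indexed by Fin n × Fin 2, and let φ(p) = (1/n)·Σ_{E ⊆ Fin n} rank(H_E) · p^|E| · (1−p)^(n−|E|). If p ∈ [0, 1/2] and M is a real number with φ(p) ≤ M, then φ(1−p) − φ(p) ≥ ((1−2p)/(1−p)) · (rank(H)/n − M). -/
open Finset

section Aux
variable {α : Type*} [DecidableEq α]

/-- weights sum to 1 -/
lemma bern_sum (G : Finset α) (s : ℝ) :
    ∑ T ∈ G.powerset, s ^ T.card * (1 - s) ^ (G.card - T.card) = 1 := by
  have h := Finset.prod_add (fun _ : α => s) (fun _ : α => 1 - s) G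
  simp only [Finset.prod_const] at h
  have : ∀ T ∈ G.powerset, s ^ T.card * (1 - s) ^ (G \ T).card
      = s ^ T.card * (1 - s) ^ (G.card - T.card) := by
    intro T hT
    rw [Finset.card_sdiff_of_subset (Finset.mem_powerset.mp hT)]
  rw [Finset.sum_congr rfl this] at h
  simpa using h.symm

/-- probability that `i ∈ T` is `s` -/
lemma bern_sum_mem (G : Finset α) (s : ℝ) {i : α} (hi : i ∈ G) :
    ∑ T ∈ G.powerset, (if i ∈ T then s ^ T.card * (1 - s) ^ (G.card - T.card) else 0)
      = s := by
  have hG : G = insert i (G.erase i) := (Finset.insert_erase hi).symm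
  have hni : i ∉ G.erase i := Finset.notMem_erase _ _
  rw [hG, Finset.sum_powerset_insert hni]
  have h1 : ∑ T ∈ (G.erase i).powerset,
      (if i ∈ T then s ^ T.card * (1 - s) ^ ((insert i (G.erase i)).card - T.card) else 0) = 0 := by
    apply Finset.sum_eq_zero
    intro T hT
    have : i ∉ T := fun h => hni (Finset.mem_powerset.mp hT h)
    simp [this]
  rw [h1, zero_add]
  have hcard : (insert i (G.erase i)).card = (G.erase i).card + 1 :=
    Finset.card_insert_of_notMem hni
  have h2 : ∀ T ∈ (G.erase i).powerset,
      (if i ∈ insert i T then s ^ (insert i T).card * (1 - s) ^ ((insert i (G.erase i)).card - (insert i T).card) else 0)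
      = s * (s ^ T.card * (1 - s) ^ ((G.erase i).card - T.card)) := by
    intro T hT
    have hTi : i ∉ T := fun h => hni (Finset.mem_powerset.mp hT h)
    rw [if_pos (Finset.mem_insert_self _ _), Finset.card_insert_of_notMem hTi, hcard]
    have : (G.erase i).card + 1 - (T.card + 1) = (G.erase i).card - T.card := by omega
    rw [this, pow_succ]
    ring
  rw [Finset.sum_congr rfl h2, ← Finset.mul_sum, bern_sum, mul_one]

/-- binomial theorem over powerset -/
lemma bern_binom (S : Finset α) (a b : ℝ) :
    ∑ F ∈ S.powerset, a ^ F.card * b ^ (S.card - F.card) = (a + b) ^ S.card := by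
  have h := Finset.prod_add (fun _ : α => a) (fun _ : α => b) S
  simp only [Finset.prod_const] at h
  have : ∀ F ∈ S.powerset, a ^ F.card * b ^ (S \ F).card
      = a ^ F.card * b ^ (S.card - F.card) := by
    intro F hF
    rw [Finset.card_sdiff_of_subset (Finset.mem_powerset.mp hF)]
  rw [Finset.sum_congr rfl this] at h
  exact h.symm


end Aux

namespace RDLB
open Matrix Module
variable {r n : ℕ} (H : Matrix (Fin r) (Fin n × Fin 2) (ZMod 2))

noncomputable def V (E : Finset (Fin n)) : Submodule (ZMod 2) (Fin r → ZMod 2) :=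
  Submodule.span (ZMod 2) (Set.range (erased H E)ᵀ)

lemma rank_eq_V (E : Finset (Fin n)) : (erased H E).rank = finrank (ZMod 2) (V H E) :=
  Matrix.rank_eq_finrank_span_cols _

lemma V_mono {A B : Finset (Fin n)} (h : A ⊆ B) : V H A ≤ V H B := by
  rw [V, Submodule.span_le]
  rintro x ⟨p, rfl⟩
  by_cases hp : p.1 ∈ A
  · have : (erased H A)ᵀ p = (erased H B)ᵀ p := by
      ext a
      simp [erased, Matrix.transpose, hp, h hp]
    rw [this]
    exact Submodule.subset_span ⟨p, rfl⟩
  · have : (erased H A)ᵀ p = 0 := by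
      ext a; simp [erased, Matrix.transpose, hp]
    rw [this]; exact Submodule.zero_mem _

lemma V_union (A B : Finset (Fin n)) : V H (A ∪ B) = V H A ⊔ V H B := by
  apply le_antisymm
  · rw [V, Submodule.span_le]
    rintro x ⟨p, rfl⟩
    by_cases hp : p.1 ∈ A
    · have : (erased H (A ∪ B))ᵀ p = (erased H A)ᵀ p := by
        ext a; simp [erased, Matrix.transpose, hp]
      rw [this]
      exact Submodule.mem_sup_left (Submodule.subset_span ⟨p, rfl⟩)
    · by_cases hq : p.1 ∈ B
      · have : (erased H (A ∪ B))ᵀ p = (erased H B)ᵀ p := by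
          ext a; simp [erased, Matrix.transpose, hp, hq]
        rw [this]
        exact Submodule.mem_sup_right (Submodule.subset_span ⟨p, rfl⟩)
      · have : (erased H (A ∪ B))ᵀ p = 0 := by
          ext a; simp [erased, Matrix.transpose, hp, hq]
        rw [this]; exact Submodule.zero_mem _
  · exact sup_le (V_mono H subset_union_left) (V_mono H subset_union_right)

lemma rank_mono {A B : Finset (Fin n)} (h : A ⊆ B) :
    (erased H A).rank ≤ (erased H B).rank := by
  rw [rank_eq_V, rank_eq_V]
  exact Submodule.finrank_mono (V_mono H h)

lemma rank_submodular {A B : Finset (Fin n)} (i : Fin n) (h : A ⊆ B) :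
    (erased H (insert i B)).rank + (erased H A).rank ≤
      (erased H B).rank + (erased H (insert i A)).rank := by
  have key := Submodule.finrank_sup_add_finrank_inf_eq (V H (insert i A)) (V H B)
  have h1 : V H (insert i A) ⊔ V H B = V H (insert i B) := by
    rw [← V_union]
    congr 1
    rw [Finset.insert_union]
    congr 1
    exact Finset.union_eq_right.mpr h
  have h2 : V H A ≤ V H (insert i A) ⊓ V H B :=
    le_inf (V_mono H (Finset.subset_insert _ _)) (V_mono H h)
  have h3 := Submodule.finrank_mono h2
  rw [h1] at key
  simp only [rank_eq_V]
  omega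


noncomputable def R (E : Finset (Fin n)) : ℝ := ((erased H E).rank : ℝ)

lemma R_mono {A B : Finset (Fin n)} (h : A ⊆ B) : R H A ≤ R H B := by
  simp only [R]
  exact_mod_cast rank_mono H h

lemma R_submod {A B : Finset (Fin n)} (i : Fin n) (h : A ⊆ B) :
    R H (insert i B) - R H B ≤ R H (insert i A) - R H A := by
  have := rank_submodular H i h
  have : ((erased H (insert i B)).rank : ℝ) + (erased H A).rank ≤
      (erased H B).rank + (erased H (insert i A)).rank := by exact_mod_cast this
  simp only [R]; linarith

/-- `Q F k = F ∪ {j | j < k}` -/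
def Q (F : Finset (Fin n)) (k : ℕ) : Finset (Fin n) :=
  F ∪ (univ.filter (fun j : Fin n => (j : ℕ) < k))

/-- marginal of the `k`-th element given `Q F k` -/
noncomputable def d (F : Finset (Fin n)) (k : ℕ) : ℝ :=
  R H (Q F (k + 1)) - R H (Q F k)

lemma Q_zero (F : Finset (Fin n)) : Q F 0 = F := by
  simp [Q]

lemma Q_top (F : Finset (Fin n)) : Q F n = univ := by
  ext j; simp [Q, j.isLt]

lemma Q_succ (F : Finset (Fin n)) (i : Fin n) :
    Q F ((i : ℕ) + 1) = insert i (Q F (i : ℕ)) := by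
  ext j
  simp only [Q, Finset.mem_union, Finset.mem_filter, Finset.mem_univ, true_and,
    Finset.mem_insert]
  constructor
  · rintro (h | h)
    · exact Or.inr (Or.inl h)
    · rcases Nat.lt_succ_iff_lt_or_eq.mp h with h' | h'
      · exact Or.inr (Or.inr h')
      · exact Or.inl (Fin.ext h')
  · rintro (rfl | h | h)
    · exact Or.inr (Nat.lt_succ_self _)
    · exact Or.inl h
    · exact Or.inr (Nat.lt_succ_of_lt h)

lemma d_eq (F : Finset (Fin n)) (i : Fin n) :
    d H F (i : ℕ) = R H (insert i (Q F (i : ℕ))) - R H (Q F (i : ℕ)) := by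
  rw [d, Q_succ]

lemma sum_d (F : Finset (Fin n)) : ∑ i : Fin n, d H F (i : ℕ) = R H univ - R H F := by
  rw [Fin.sum_univ_eq_sum_range (fun k => d H F k) n]
  have := Finset.sum_range_sub (fun k => R H (Q F k)) n
  simp only [d]
  rw [this, Q_zero, Q_top]

/-- key telescoping lower bound -/
lemma key_lb (F : Finset (Fin n)) (T : Finset (Fin n)) :
    R H F + ∑ i ∈ T, d H F (i : ℕ) ≤ R H (F ∪ T) := by
  induction T using Finset.strongInduction with
  | _ T ih =>
    rcases T.eq_empty_or_nonempty with rfl | hT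
    · simp
    · set i := T.max' hT with hi
      have hiT : i ∈ T := T.max'_mem hT
      set T' := T.erase i with hT'
      have hins : T = insert i T' := by
        rw [hT', Finset.insert_erase hiT]
      have hsub : T' ⊂ T := Finset.erase_ssubset hiT
      have hIH := ih T' hsub
      have hAB : F ∪ T' ⊆ Q F (i : ℕ) := by
        intro j hj
        rcases Finset.mem_union.mp hj with hj | hj
        · exact Finset.mem_union_left _ hj
        · have hji : j ≠ i := Finset.ne_of_mem_erase hj
          have : j ≤ i := T.le_max' j (Finset.mem_of_mem_erase hj)
          have : (j : ℕ) < (i : ℕ) := lt_of_le_of_ne (Fin.le_iff_val_le_val.mp this)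
            (fun h => hji (Fin.ext h))
          exact Finset.mem_union_right _ (Finset.mem_filter.mpr ⟨Finset.mem_univ _, this⟩)
      have hsm := R_submod H i hAB
      rw [← d_eq] at hsm
      have hins2 : insert i (F ∪ T') = F ∪ T := by rw [hins, Finset.union_insert]
      rw [hins2] at hsm
      have hsum : ∑ j ∈ T, d H F (j : ℕ) = d H F (i : ℕ) + ∑ j ∈ T', d H F (j : ℕ) := by
        rw [hins, Finset.sum_insert (Finset.notMem_erase _ _)]
      linarith

lemma d_zero_of_mem (F : Finset (Fin n)) (i : Fin n) (h : i ∈ F) : d H F (i : ℕ) = 0 := by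
  rw [d_eq]
  have : insert i (Q F (i : ℕ)) = Q F (i : ℕ) :=
    Finset.insert_eq_self.mpr (Finset.mem_union_left _ h)
  rw [this, sub_self]


/-- Step 2: conditional expectation bound for a fixed `F`. -/
lemma step2 (F : Finset (Fin n)) {s : ℝ} (hs0 : 0 ≤ s) (hs1 : s ≤ 1) :
    (1 - s) * R H F + s * R H univ ≤
      ∑ T ∈ Fᶜ.powerset, s ^ T.card * (1 - s) ^ (Fᶜ.card - T.card) * R H (F ∪ T) := by
  have hw : ∀ T ∈ Fᶜ.powerset, (0:ℝ) ≤ s ^ T.card * (1 - s) ^ (Fᶜ.card - T.card) :=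
    fun T _ => mul_nonneg (pow_nonneg hs0 _) (pow_nonneg (by linarith) _)
  have h1 : ∑ T ∈ Fᶜ.powerset, s ^ T.card * (1 - s) ^ (Fᶜ.card - T.card) *
        (R H F + ∑ i ∈ T, d H F (i : ℕ)) ≤
      ∑ T ∈ Fᶜ.powerset, s ^ T.card * (1 - s) ^ (Fᶜ.card - T.card) * R H (F ∪ T) := by
    apply Finset.sum_le_sum
    intro T hT
    exact mul_le_mul_of_nonneg_left (key_lb H F T) (hw T hT)
  refine le_trans ?_ h1
  have h2 : ∑ T ∈ Fᶜ.powerset, s ^ T.card * (1 - s) ^ (Fᶜ.card - T.card) *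
        (R H F + ∑ i ∈ T, d H F (i : ℕ))
      = R H F * (∑ T ∈ Fᶜ.powerset, s ^ T.card * (1 - s) ^ (Fᶜ.card - T.card))
        + ∑ T ∈ Fᶜ.powerset, ∑ i ∈ Fᶜ, (if i ∈ T then
            s ^ T.card * (1 - s) ^ (Fᶜ.card - T.card) * d H F (i : ℕ) else 0) := by
    rw [Finset.mul_sum]
    rw [← Finset.sum_add_distrib]
    apply Finset.sum_congr rfl
    intro T hT
    have hTsub : T ⊆ Fᶜ := Finset.mem_powerset.mp hT
    have : ∑ i ∈ Fᶜ, (if i ∈ T then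
          s ^ T.card * (1 - s) ^ (Fᶜ.card - T.card) * d H F (i : ℕ) else 0)
        = s ^ T.card * (1 - s) ^ (Fᶜ.card - T.card) * ∑ i ∈ T, d H F (i : ℕ) := by
      rw [Finset.sum_ite_mem, Finset.inter_eq_right.mpr hTsub, Finset.mul_sum]
    rw [this]
    ring
  rw [h2, bern_sum, mul_one]
  have h3 : ∑ T ∈ Fᶜ.powerset, ∑ i ∈ Fᶜ, (if i ∈ T then
        s ^ T.card * (1 - s) ^ (Fᶜ.card - T.card) * d H F (i : ℕ) else 0)
      = s * (R H univ - R H F) := by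
    rw [Finset.sum_comm]
    have : ∀ i ∈ Fᶜ, ∑ T ∈ Fᶜ.powerset, (if i ∈ T then
          s ^ T.card * (1 - s) ^ (Fᶜ.card - T.card) * d H F (i : ℕ) else 0)
        = s * d H F (i : ℕ) := by
      intro i hi
      have : ∑ T ∈ Fᶜ.powerset, (if i ∈ T then
            s ^ T.card * (1 - s) ^ (Fᶜ.card - T.card) * d H F (i : ℕ) else 0)
          = (∑ T ∈ Fᶜ.powerset, if i ∈ T then
            s ^ T.card * (1 - s) ^ (Fᶜ.card - T.card) else 0) * d H F (i : ℕ) := by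
        rw [Finset.sum_mul]
        apply Finset.sum_congr rfl
        intro T _
        split <;> simp
      rw [this, bern_sum_mem _ _ hi]
    rw [Finset.sum_congr rfl this, ← Finset.mul_sum]
    congr 1
    rw [← sum_d H F]
    refine Finset.sum_subset (Finset.subset_univ Fᶜ) ?_
    intro i _ hi
    exact d_zero_of_mem H F i (by simpa using hi)
  rw [h3]
  ring_nf
  apply le_of_eq
  ring

/-- Step 1: the mixing identity. -/
lemma step1 (p s : ℝ) :
    ∑ F : Finset (Fin n), p ^ F.card * (1 - p) ^ (n - F.card) *
        (∑ T ∈ Fᶜ.powerset, s ^ T.card * (1 - s) ^ (Fᶜ.card - T.card) * R H (F ∪ T))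
      = ∑ S : Finset (Fin n),
          (p + (1 - p) * s) ^ S.card * ((1 - p) * (1 - s)) ^ (n - S.card) * R H S := by
  have inner_eq : ∀ F : Finset (Fin n),
      ∑ T ∈ Fᶜ.powerset, s ^ T.card * (1 - s) ^ (Fᶜ.card - T.card) * R H (F ∪ T)
        = ∑ S : Finset (Fin n), (if F ⊆ S then
            s ^ (S.card - F.card) * (1 - s) ^ (n - S.card) * R H S else 0) := by
    intro F
    rw [← Finset.sum_filter]
    apply Finset.sum_nbij' (fun T => F ∪ T) (fun S => S \ F)
    · intro T hT
      simp only [Finset.mem_filter, Finset.mem_univ, true_and]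
      exact Finset.subset_union_left
    · intro S hS
      simp only [Finset.mem_powerset]
      intro x hx
      simp only [Finset.mem_sdiff] at hx
      simp [Finset.mem_compl, hx.2]
    · intro T hT
      have hTsub : T ⊆ Fᶜ := Finset.mem_powerset.mp hT
      have hdisj : Disjoint F T := by
        rw [Finset.disjoint_right]
        intro x hx
        have := hTsub hx
        simp only [Finset.mem_compl] at this
        exact this
      rw [Finset.union_sdiff_cancel_left hdisj]
    · intro S hS
      simp only [Finset.mem_filter] at hS
      exact Finset.union_sdiff_of_subset hS.2
    · intro T hT
      have hTsub : T ⊆ Fᶜ := Finset.mem_powerset.mp hT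
      have hdisj : Disjoint F T := by
        rw [Finset.disjoint_right]
        intro x hx
        have := hTsub hx
        simp only [Finset.mem_compl] at this
        exact this
      have hcard : (F ∪ T).card = F.card + T.card := Finset.card_union_of_disjoint hdisj
      have hc1 : (F ∪ T).card - F.card = T.card := by omega
      have hcomp : Fᶜ.card = n - F.card := by
        rw [Finset.card_compl]
        simp [Fintype.card_fin]
      have hFle : F.card ≤ n := le_trans (Finset.card_le_card (Finset.subset_univ F))
        (by simp [Fintype.card_fin])
      have hTle : T.card ≤ Fᶜ.card := Finset.card_le_card hTsub
      have hc2 : n - (F ∪ T).card = Fᶜ.card - T.card := by omega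
      rw [hc1, hc2]
  calc ∑ F : Finset (Fin n), p ^ F.card * (1 - p) ^ (n - F.card) *
        (∑ T ∈ Fᶜ.powerset, s ^ T.card * (1 - s) ^ (Fᶜ.card - T.card) * R H (F ∪ T))
      = ∑ F : Finset (Fin n), ∑ S : Finset (Fin n), (if F ⊆ S then
          p ^ F.card * (1 - p) ^ (n - F.card) *
            (s ^ (S.card - F.card) * (1 - s) ^ (n - S.card) * R H S) else 0) := by
        apply Finset.sum_congr rfl
        intro F _
        rw [inner_eq F, Finset.mul_sum]
        apply Finset.sum_congr rfl
        intro S _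
        split <;> simp
    _ = ∑ S : Finset (Fin n), ∑ F ∈ S.powerset,
          p ^ F.card * (1 - p) ^ (n - F.card) *
            (s ^ (S.card - F.card) * (1 - s) ^ (n - S.card) * R H S) := by
        rw [Finset.sum_comm]
        apply Finset.sum_congr rfl
        intro S _
        rw [← Finset.sum_filter]
        apply Finset.sum_congr ?_ (fun _ _ => rfl)
        ext F
        simp [Finset.mem_powerset]
    _ = ∑ S : Finset (Fin n),
          (p + (1 - p) * s) ^ S.card * ((1 - p) * (1 - s)) ^ (n - S.card) * R H S := by
        apply Finset.sum_congr rfl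
        intro S _
        have hSle : S.card ≤ n := le_trans (Finset.card_le_card (Finset.subset_univ S))
          (by simp [Fintype.card_fin])
        have key : ∑ F ∈ S.powerset, p ^ F.card * (1 - p) ^ (n - F.card) *
              s ^ (S.card - F.card)
            = (p + (1 - p) * s) ^ S.card * (1 - p) ^ (n - S.card) := by
          have : ∀ F ∈ S.powerset, p ^ F.card * (1 - p) ^ (n - F.card) * s ^ (S.card - F.card)
              = (p ^ F.card * ((1 - p) * s) ^ (S.card - F.card)) * (1 - p) ^ (n - S.card) := by
            intro F hF
            have hFS : F.card ≤ S.card := Finset.card_le_card (Finset.mem_powerset.mp hF)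
            have : n - F.card = (S.card - F.card) + (n - S.card) := by omega
            rw [this, pow_add, mul_pow]
            ring
          rw [Finset.sum_congr rfl this, ← Finset.sum_mul]
          congr 1
          exact bern_binom S p ((1 - p) * s)
        calc ∑ F ∈ S.powerset, p ^ F.card * (1 - p) ^ (n - F.card) *
              (s ^ (S.card - F.card) * (1 - s) ^ (n - S.card) * R H S)
            = (∑ F ∈ S.powerset, p ^ F.card * (1 - p) ^ (n - F.card) * s ^ (S.card - F.card))
              * ((1 - s) ^ (n - S.card) * R H S) := by
              rw [Finset.sum_mul]
              apply Finset.sum_congr rfl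
              intro F _
              ring
          _ = (p + (1 - p) * s) ^ S.card * ((1 - p) * (1 - s)) ^ (n - S.card) * R H S := by
              rw [key, mul_pow]
              ring


noncomputable def g (q : ℝ) : ℝ :=
  ∑ S : Finset (Fin n), q ^ S.card * (1 - q) ^ (n - S.card) * R H S

lemma phi_eq_g (q : ℝ) : phi H q = (1 / n : ℝ) * g H q := by
  unfold phi g
  congr 1
  apply Finset.sum_congr rfl
  intro S _
  rw [R]; ring

lemma sum_w (p : ℝ) :
    ∑ F : Finset (Fin n), p ^ F.card * (1 - p) ^ (n - F.card) = 1 := by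
  have h := bern_sum (univ : Finset (Fin n)) p
  rw [Finset.powerset_univ] at h
  simpa [Finset.card_univ] using h

lemma R_univ : R H univ = (H.rank : ℝ) := by
  have : erased H univ = H := by
    ext a p; simp [erased]
  rw [R, this]


end RDLB


open RDLB in
theorem rank_difference_lower_bound
    {r n : ℕ} (hn : 1 ≤ n) (H : Matrix (Fin r) (Fin n × Fin 2) (ZMod 2))
    (p M : ℝ) (hp : p ∈ Set.Icc (0 : ℝ) (1 / 2)) (hM : phi H p ≤ M) :
    ((1 - 2 * p) / (1 - p)) * ((H.rank : ℝ) / n - M) ≤ phi H (1 - p) - phi H p := by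
  obtain ⟨hp0, hp2⟩ := hp
  have h1p : (0:ℝ) < 1 - p := by linarith
  set s : ℝ := (1 - 2 * p) / (1 - p) with hs_def
  have hs0 : 0 ≤ s := div_nonneg (by linarith) h1p.le
  have hs1 : s ≤ 1 := by
    rw [div_le_one h1p]; linarith
  have e1 : p + (1 - p) * s = 1 - p := by
    rw [hs_def]; field_simp; ring
  have e2 : (1 - p) * (1 - s) = p := by
    rw [hs_def]; field_simp; ring
  have hn0 : (0:ℝ) < (n:ℝ) := by exact_mod_cast Nat.lt_of_lt_of_le Nat.zero_lt_one hn
  -- chain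
  have hstep1 := step1 H p s
  rw [e1, e2] at hstep1
  have hg1p : g H (1 - p) = ∑ S : Finset (Fin n),
      (1 - p) ^ S.card * p ^ (n - S.card) * R H S := by
    unfold g
    apply Finset.sum_congr rfl
    intro S _
    rw [sub_sub_cancel]
  have hchain : (1 - s) * g H p + s * R H univ ≤ g H (1 - p) := by
    rw [hg1p, ← hstep1]
    have hle : ∑ F : Finset (Fin n), p ^ F.card * (1 - p) ^ (n - F.card) *
          ((1 - s) * R H F + s * R H univ) ≤
        ∑ F : Finset (Fin n), p ^ F.card * (1 - p) ^ (n - F.card) *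
          (∑ T ∈ Fᶜ.powerset, s ^ T.card * (1 - s) ^ (Fᶜ.card - T.card) * R H (F ∪ T)) := by
      apply Finset.sum_le_sum
      intro F _
      apply mul_le_mul_of_nonneg_left (step2 H F hs0 hs1)
      exact mul_nonneg (pow_nonneg hp0 _) (pow_nonneg h1p.le _)
    refine le_trans (le_of_eq ?_) hle
    have expand : ∑ F : Finset (Fin n), p ^ F.card * (1 - p) ^ (n - F.card) *
        ((1 - s) * R H F + s * R H univ)
        = (1 - s) * g H p + s * R H univ *
          ∑ F : Finset (Fin n), p ^ F.card * (1 - p) ^ (n - F.card) := by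
      unfold g
      rw [Finset.mul_sum, Finset.mul_sum, ← Finset.sum_add_distrib]
      apply Finset.sum_congr rfl
      intro F _
      ring
    rw [expand, sum_w, mul_one]
  -- numeric assembly
  have hA : g H p ≤ (n:ℝ) * M := by
    rw [phi_eq_g] at hM
    have h := mul_le_mul_of_nonneg_left hM hn0.le
    rwa [← mul_assoc, mul_one_div, div_self hn0.ne', one_mul] at h
  rw [R_univ] at hchain
  have h4 : s * ((H.rank : ℝ) - (n:ℝ) * M) ≤ g H (1 - p) - g H p := by
    have h5 : s * ((H.rank : ℝ) - (n:ℝ) * M) ≤ s * ((H.rank : ℝ) - g H p) :=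
      mul_le_mul_of_nonneg_left (by linarith) hs0
    have hexp : (1 - s) * g H p = g H p - s * g H p := by ring
    rw [hexp] at hchain
    have h5' : s * ((H.rank : ℝ) - (n:ℝ) * M) ≤ s * (H.rank : ℝ) - s * g H p := by
      rw [mul_sub] at h5; linarith
    linarith
  rw [phi_eq_g, phi_eq_g]
  have h6 : s * ((H.rank : ℝ) / n - M) = (1 / n : ℝ) * (s * ((H.rank : ℝ) - (n:ℝ) * M)) := by
    field_simp
  rw [h6]
  have h7 := mul_le_mul_of_nonneg_left h4 (by positivity : (0:ℝ) ≤ 1 / n)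
  linarith
end
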